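/- Let $\{a_n\},\{b_n\}$ be sequences of positive integers and $\{c_n\},\{d_n\}$ real sequences with $a_n\le b_n$, and $\psi:\mathbb{N}\to[0,\infty)$. If $\sum_{n\in\mathbb{N}}\psi(n)\log\frac{1}{\psi(n)}+\sum_{n\in\mathbb{N}}\gcd(a_n,b_n)(\psi(n)/(a_nb_n))^{1/2}<\infty$, then $\lambda(M(\psi))=0$, where $M(\psi)=\{x\in[0,1]:\|a_nx+c_n\|\cdot\|b_nx+d_n\|<\psi(n)\text{ for infinitely many }n\}$. -/

import Mathlib

open Set MeasureTheory Filter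
open scoped ENNReal

/-- Distance from `x` to the nearest integer. -/
noncomputable def nint (x : ℝ) : ℝ := |x - round x|

/-- `log` with the convention that `log x = 1` for `x ≤ e`. -/
noncomputable def clog (x : ℝ) : ℝ := max 1 (Real.log x)


lemma nint_nonneg (x : ℝ) : 0 ≤ nint x := abs_nonneg _

lemma nint_le_half (x : ℝ) : nint x ≤ 1/2 := abs_sub_round x

lemma nint_le (y : ℝ) (m : ℤ) : nint y ≤ |y - m| := by
  rcases le_or_gt (1/2) (|y - m|) with h | h
  · exact (nint_le_half y).trans h
  · have hy : round y = m := by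
      have h1 : |y - (m:ℝ)| < 1/2 := h
      rw [abs_sub_lt_iff] at h1
      have he : y = (y - m) + m := by ring
      rw [he, round_add_intCast, round_eq_zero_iff.mpr ⟨by linarith [h1.2], h1.1⟩, zero_add]
    rw [nint, hy]

lemma nint_lt_iff {y δ : ℝ} : nint y < δ ↔ ∃ m : ℤ, |y - m| < δ := by
  constructor
  · intro h; exact ⟨round y, h⟩
  · rintro ⟨m, hm⟩; exact lt_of_le_of_lt (nint_le y m) hm

lemma nint_pos_ne {y : ℝ} (h : nint y = 0) : ∃ m : ℤ, y = m := by
  refine ⟨round y, ?_⟩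
  have := abs_eq_zero.mp h
  linarith

lemma count_lemma (T : Finset ℤ) (s : ℕ) (hs : 1 ≤ s) (lo hi : ℝ) (hlohi : lo ≤ hi)
    (hmem : ∀ x ∈ T, lo ≤ (x:ℝ) ∧ (x:ℝ) ≤ hi)
    (hdvd : ∀ x ∈ T, ∀ y ∈ T, (s:ℤ) ∣ x - y) :
    (T.card : ℝ) ≤ (hi - lo)/s + 1 := by
  have hs0 : (0:ℝ) < s := by exact_mod_cast hs
  have hRHS0 : (0:ℝ) ≤ (hi - lo)/s := div_nonneg (by linarith) hs0.le
  rcases T.eq_empty_or_nonempty with hT | ⟨m₀, hm₀⟩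
  · simp [hT]; linarith
  set qlo : ℤ := ⌈(lo - m₀)/(s:ℝ)⌉ with hqlo
  set qhi : ℤ := ⌊(hi - m₀)/(s:ℝ)⌋ with hqhi
  have key : ∀ x ∈ T, (s:ℤ) * ((x - m₀)/s) = x - m₀ := fun x hx =>
    Int.mul_ediv_cancel' (hdvd x hx m₀ hm₀)
  have hmaps : ∀ x ∈ T, (x - m₀)/(s:ℤ) ∈ Finset.Icc qlo qhi := by
    intro x hx
    set q : ℤ := (x - m₀)/(s:ℤ) with hqdef
    have hq : (s:ℤ) * q = x - m₀ := key x hx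
    have hr : (s:ℝ) * (q:ℝ) = (x:ℝ) - (m₀:ℝ) := by exact_mod_cast hq
    obtain ⟨h1, h2⟩ := hmem x hx
    obtain ⟨g1, g2⟩ := hmem m₀ hm₀
    have hcomm : (q:ℝ)*(s:ℝ) = (s:ℝ)*(q:ℝ) := mul_comm _ _
    rw [Finset.mem_Icc]
    refine ⟨Int.ceil_le.mpr ?_, Int.le_floor.mpr ?_⟩
    · rw [div_le_iff₀ hs0]; linarith
    · rw [le_div_iff₀ hs0]; linarith
  have hinj : Set.InjOn (fun x => (x - m₀)/(s:ℤ)) T := by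
    intro x hx y hy hxy
    have k1 := key x hx
    have k2 := key y hy
    simp only at hxy
    rw [hxy] at k1
    omega
  have hcard : T.card ≤ (Finset.Icc qlo qhi).card :=
    Finset.card_le_card_of_injOn _ hmaps hinj
  have hq1 : (qlo : ℝ) ≥ (lo - m₀)/s := Int.le_ceil _
  have hq2 : (qhi : ℝ) ≤ (hi - m₀)/s := Int.floor_le _
  rcases le_or_gt qlo qhi with hle | hlt
  · have hic : (Finset.Icc qlo qhi).card = (qhi + 1 - qlo).toNat := Int.card_Icc _ _
    have hc : ((Finset.Icc qlo qhi).card : ℝ) = (qhi : ℝ) + 1 - qlo := by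
      have hnn : (0:ℤ) ≤ qhi + 1 - qlo := by omega
      have h2 : ((qhi + 1 - qlo).toNat : ℤ) = qhi + 1 - qlo := Int.toNat_of_nonneg hnn
      have h3 : ((qhi + 1 - qlo).toNat : ℝ) = (qhi:ℝ) + 1 - qlo := by
        have := congrArg (fun z : ℤ => (z : ℝ)) h2
        push_cast at this
        convert this using 1 <;> push_cast <;> ring
      rw [hic, h3]
    calc (T.card : ℝ) ≤ ((Finset.Icc qlo qhi).card : ℝ) := by exact_mod_cast hcard
      _ = (qhi : ℝ) + 1 - qlo := hc
      _ ≤ (hi - m₀)/s + 1 - (lo - m₀)/s := by linarith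
      _ = (hi - lo)/s + 1 := by field_simp; ring
  · have hic : Finset.Icc qlo qhi = ∅ := Finset.Icc_eq_empty (by omega)
    rw [hic] at hcard
    simp at hcard
    simp [hcard]
    linarith

lemma mem_cover (a : ℕ) (ha : 1 ≤ a) (c δ x : ℝ) (hx : x ∈ Icc (0:ℝ) 1)
    (h : nint ((a:ℝ)*x + c) < δ) :
    ∃ m : ℤ, m ∈ Finset.Icc ⌈c - δ⌉ ⌊(a:ℝ) + c + δ⌋ ∧
      x ∈ Ioo (((m:ℝ) - c - δ)/a) (((m:ℝ) - c + δ)/a) ∧ |(a:ℝ)*x + c - m| < δ := by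
  have ha0 : (0:ℝ) < a := by exact_mod_cast ha
  obtain ⟨m, hm⟩ := nint_lt_iff.mp h
  obtain ⟨hx0, hx1⟩ := hx
  have hax0 : 0 ≤ (a:ℝ)*x := mul_nonneg ha0.le hx0
  have hax1 : (a:ℝ)*x ≤ a := by nlinarith
  rw [abs_sub_lt_iff] at hm
  obtain ⟨hm1, hm2⟩ := hm
  refine ⟨m, ?_, ?_, ?_⟩
  · rw [Finset.mem_Icc]
    constructor
    · exact Int.ceil_le.mpr (by linarith)
    · exact Int.le_floor.mpr (by linarith)
  · constructor
    · rw [div_lt_iff₀ ha0]; linarith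
    · rw [lt_div_iff₀ ha0]; linarith
  · rw [abs_sub_lt_iff]; exact ⟨by linarith, by linarith⟩

lemma vol_Ioo_cover (a : ℕ) (ha : 1 ≤ a) (c δ : ℝ) (m : ℤ) :
    volume (Ioo (((m:ℝ) - c - δ)/a) (((m:ℝ) - c + δ)/a)) = ENNReal.ofReal (2*δ/a) := by
  have ha0 : (0:ℝ) < a := by exact_mod_cast ha
  rw [Real.volume_Ioo]
  congr 1
  field_simp
  ring

lemma card_window (a : ℕ) (ha : 1 ≤ a) (c δ : ℝ) (hδ : 0 < δ) (hδ2 : δ ≤ 1/2) :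
    ((Finset.Icc ⌈c - δ⌉ ⌊(a:ℝ) + c + δ⌋).card : ℝ) ≤ (a:ℝ) + 2 := by
  have h := count_lemma (Finset.Icc ⌈c - δ⌉ ⌊(a:ℝ) + c + δ⌋) 1 le_rfl (c - δ) ((a:ℝ) + c + δ)
    (by
      have h0 : (0:ℝ) ≤ a := Nat.cast_nonneg a
      linarith)
    (by intro x hx
        rw [Finset.mem_Icc] at hx
        exact ⟨le_trans (Int.le_ceil _) (by exact_mod_cast hx.1),
          le_trans (by exact_mod_cast hx.2) (Int.floor_le _)⟩)
    (by intro x _ y _; exact one_dvd _)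
  rw [Nat.cast_one, div_one] at h
  linarith

lemma measure_single (a : ℕ) (ha : 1 ≤ a) (c δ : ℝ) (hδ : 0 < δ) :
    volume {x ∈ Icc (0:ℝ) 1 | nint ((a:ℝ)*x + c) < δ} ≤ ENNReal.ofReal (6*δ) := by
  have ha0 : (0:ℝ) < a := by exact_mod_cast ha
  rcases le_or_gt δ (1/2) with hδ2 | hδ2
  · set M := Finset.Icc ⌈c - δ⌉ ⌊(a:ℝ) + c + δ⌋ with hM
    have hsub : {x ∈ Icc (0:ℝ) 1 | nint ((a:ℝ)*x + c) < δ} ⊆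
        ⋃ m ∈ M, Ioo (((m:ℝ) - c - δ)/a) (((m:ℝ) - c + δ)/a) := by
      rintro x ⟨hx, hnx⟩
      obtain ⟨m, hm1, hm2, _⟩ := mem_cover a ha c δ x hx hnx
      exact mem_biUnion hm1 hm2
    calc volume {x ∈ Icc (0:ℝ) 1 | nint ((a:ℝ)*x + c) < δ}
        ≤ volume (⋃ m ∈ M, Ioo (((m:ℝ) - c - δ)/a) (((m:ℝ) - c + δ)/a)) := measure_mono hsub
      _ ≤ ∑ m ∈ M, volume (Ioo (((m:ℝ) - c - δ)/a) (((m:ℝ) - c + δ)/a)) :=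
          measure_biUnion_finset_le M _
      _ = M.card • ENNReal.ofReal (2*δ/a) := by
          rw [Finset.sum_congr rfl (fun m _ => vol_Ioo_cover a ha c δ m), Finset.sum_const]
      _ = ENNReal.ofReal (M.card * (2*δ/a)) := by
          rw [nsmul_eq_mul, ← ENNReal.ofReal_natCast, ← ENNReal.ofReal_mul (by positivity)]
      _ ≤ ENNReal.ofReal (6*δ) := by
          apply ENNReal.ofReal_le_ofReal
          have hcard := card_window a ha c δ hδ hδ2
          have h1 : (M.card : ℝ) * (2*δ/a) ≤ ((a:ℝ) + 2) * (2*δ/a) := by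
            apply mul_le_mul_of_nonneg_right hcard (by positivity)
          have ha1 : (1:ℝ) ≤ a := by exact_mod_cast ha
          have heq : ((a:ℝ) + 2) * (2*δ/a) = (((a:ℝ)+2)*(2*δ))/a := by ring
          have h2 : ((a:ℝ) + 2) * (2*δ/a) ≤ 6*δ := by
            rw [heq, div_le_iff₀ ha0]
            nlinarith
          linarith
  · calc volume {x ∈ Icc (0:ℝ) 1 | nint ((a:ℝ)*x + c) < δ}
        ≤ volume (Icc (0:ℝ) 1) := measure_mono (fun x hx => hx.1)
      _ = 1 := by rw [Real.volume_Icc]; norm_num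
      _ ≤ ENNReal.ofReal (6*δ) := by
          rw [show (1 : ℝ≥0∞) = ENNReal.ofReal 1 by simp]
          exact ENNReal.ofReal_le_ofReal (by linarith)

lemma measure_pair (a b : ℕ) (ha : 1 ≤ a) (hb : 1 ≤ b) (c d δ ε : ℝ)
    (hδ : 0 < δ) (hδ2 : δ ≤ 1/2) (hε : 0 < ε) :
    volume {x ∈ Icc (0:ℝ) 1 | nint ((a:ℝ)*x + c) < δ ∧ nint ((b:ℝ)*x + d) < ε} ≤
      ENNReal.ofReal ((6*((b:ℝ)*δ + (a:ℝ)*ε) + 3*(Nat.gcd a b : ℝ)) *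
        min (2*δ/(a:ℝ)) (2*ε/(b:ℝ))) := by
  classical
  have ha0 : (0:ℝ) < a := by exact_mod_cast ha
  have hb0 : (0:ℝ) < b := by exact_mod_cast hb
  set g : ℕ := Nat.gcd a b with hgdef
  have hg : 1 ≤ g := Nat.gcd_pos_of_pos_left _ (by omega)
  have hg0 : (0:ℝ) < g := by exact_mod_cast hg
  set θ : ℝ := (b:ℝ)*c - (a:ℝ)*d with hθ
  set r : ℝ := (b:ℝ)*δ + (a:ℝ)*ε with hr
  have hr0 : 0 < r := by positivity
  set L : ℝ := min (2*δ/(a:ℝ)) (2*ε/(b:ℝ)) with hL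
  have hL0 : 0 ≤ L := le_of_lt (lt_min (by positivity) (by positivity))
  set f : ℤ × ℤ → ℤ := fun p => (b:ℤ)*p.1 - (a:ℤ)*p.2 with hf
  set M := Finset.Icc ⌈c - δ⌉ ⌊(a:ℝ) + c + δ⌋ with hM
  set K := Finset.Icc ⌈d - ε⌉ ⌊(b:ℝ) + d + ε⌋ with hK
  set P := (M ×ˢ K).filter (fun p => |((f p : ℤ):ℝ) - θ| < r) with hP
  set I : ℤ × ℤ → Set ℝ := fun p =>
    Ioo (((p.1:ℝ) - c - δ)/a) (((p.1:ℝ) - c + δ)/a) ∩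
    Ioo (((p.2:ℝ) - d - ε)/b) (((p.2:ℝ) - d + ε)/b) with hI
  -- the subset relation
  have hsub : {x ∈ Icc (0:ℝ) 1 | nint ((a:ℝ)*x + c) < δ ∧ nint ((b:ℝ)*x + d) < ε} ⊆
      ⋃ p ∈ P, I p := by
    rintro x ⟨hx, h1, h2⟩
    obtain ⟨m, hmM, hmI, hm⟩ := mem_cover a ha c δ x hx h1
    obtain ⟨k, hkK, hkI, hk⟩ := mem_cover b hb d ε x hx h2
    have habs : |((f (m,k) : ℤ):ℝ) - θ| < r := by
      have he : ((f (m,k) : ℤ):ℝ) - θ =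
          -((b:ℝ)*((a:ℝ)*x + c - m) - (a:ℝ)*((b:ℝ)*x + d - k)) := by
        simp only [hf, hθ]
        push_cast
        ring
      rw [he, abs_neg]
      calc |(b:ℝ)*((a:ℝ)*x + c - m) - (a:ℝ)*((b:ℝ)*x + d - k)|
          ≤ |(b:ℝ)*((a:ℝ)*x + c - m)| + |(a:ℝ)*((b:ℝ)*x + d - k)| := abs_sub _ _
        _ = (b:ℝ)*|(a:ℝ)*x + c - m| + (a:ℝ)*|(b:ℝ)*x + d - k| := by
            rw [abs_mul, abs_mul, abs_of_pos hb0, abs_of_pos ha0]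
        _ < (b:ℝ)*δ + (a:ℝ)*ε := by
            apply add_lt_add
            · exact mul_lt_mul_of_pos_left hm hb0
            · exact mul_lt_mul_of_pos_left hk ha0
    have hPmem : (m, k) ∈ P := by
      rw [hP, Finset.mem_filter]
      exact ⟨Finset.mem_product.mpr ⟨hmM, hkK⟩, habs⟩
    exact mem_biUnion hPmem ⟨hmI, hkI⟩
  -- volume of each piece
  have hvol : ∀ p : ℤ × ℤ, volume (I p) ≤ ENNReal.ofReal L := by
    intro p
    rcases le_total (2*δ/(a:ℝ)) (2*ε/(b:ℝ)) with hle | hle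
    · rw [hL, min_eq_left hle]
      calc volume (I p) ≤ volume (Ioo (((p.1:ℝ) - c - δ)/a) (((p.1:ℝ) - c + δ)/a)) :=
            measure_mono inter_subset_left
        _ = ENNReal.ofReal (2*δ/a) := vol_Ioo_cover a ha c δ p.1
    · rw [hL, min_eq_right hle]
      calc volume (I p) ≤ volume (Ioo (((p.2:ℝ) - d - ε)/b) (((p.2:ℝ) - d + ε)/b)) :=
            measure_mono inter_subset_right
        _ = ENNReal.ofReal (2*ε/b) := vol_Ioo_cover b hb d ε p.2
  -- bound on the cardinality of the image
  have himg : ((P.image f).card : ℝ) ≤ (θ + r - (θ - r))/g + 1 := by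
    apply count_lemma _ g hg
    · linarith
    · intro t ht
      obtain ⟨p, hp, rfl⟩ := Finset.mem_image.mp ht
      have hfp := (Finset.mem_filter.mp hp).2
      rw [abs_sub_lt_iff] at hfp
      exact ⟨by linarith [hfp.1, hfp.2], by linarith [hfp.1, hfp.2]⟩
    · intro t ht t' ht'
      obtain ⟨p, hp, rfl⟩ := Finset.mem_image.mp ht
      obtain ⟨q, hq, rfl⟩ := Finset.mem_image.mp ht'
      have hga : (g:ℤ) ∣ (b:ℤ) := Int.natCast_dvd_natCast.mpr (Nat.gcd_dvd_right a b)
      have hgb : (g:ℤ) ∣ (a:ℤ) := Int.natCast_dvd_natCast.mpr (Nat.gcd_dvd_left a b)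
      have d1 : (g:ℤ) ∣ f p := dvd_sub (hga.mul_right _) (hgb.mul_right _)
      have d2 : (g:ℤ) ∣ f q := dvd_sub (hga.mul_right _) (hgb.mul_right _)
      exact dvd_sub d1 d2
  -- bound on fibers
  have hfiber : ∀ t ∈ P.image f, (P.filter (fun p => f p = t)).card ≤ 3*g := by
    intro t _
    set F := P.filter (fun p => f p = t) with hF
    have hinj : Set.InjOn Prod.fst (F : Set (ℤ × ℤ)) := by
      rintro ⟨m, k⟩ hmk ⟨m', k'⟩ hmk' hh
      simp only [Prod.fst] at hh
      subst hh
      have e1 : f (m, k) = t := (Finset.mem_filter.mp hmk).2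
      have e2 : f (m, k') = t := (Finset.mem_filter.mp hmk').2
      simp only [hf] at e1 e2
      have : (a:ℤ) * k = (a:ℤ) * k' := by omega
      have hk : k = k' := mul_left_cancel₀ (by exact_mod_cast (by omega : a ≠ 0)) this
      rw [hk]
    have hcardF : F.card = (F.image Prod.fst).card := (Finset.card_image_of_injOn hinj).symm
    have hgdvda : g ∣ a := Nat.gcd_dvd_left a b
    have hag : 1 ≤ a / g := (Nat.one_le_div_iff (by omega)).mpr (Nat.le_of_dvd (by omega) hgdvda)
    have hcast : ((a / g : ℕ) : ℝ) = (a:ℝ)/g := by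
      rw [Nat.cast_div hgdvda (by exact_mod_cast (by omega : g ≠ 0))]
    have hcount : ((F.image Prod.fst).card : ℝ) ≤ ((a:ℝ) + c + δ - (c - δ))/((a/g : ℕ):ℝ) + 1 := by
      apply count_lemma _ (a/g) hag
      · have : (0:ℝ) ≤ a := ha0.le
        linarith
      · intro m hm
        obtain ⟨p, hp, rfl⟩ := Finset.mem_image.mp hm
        have hpP : p ∈ P := Finset.mem_of_mem_filter _ hp
        have hpM : p.1 ∈ M := (Finset.mem_product.mp (Finset.mem_of_mem_filter _ hpP)).1
        rw [hM, Finset.mem_Icc] at hpM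
        constructor
        · calc c - δ ≤ (⌈c - δ⌉ : ℝ) := Int.le_ceil _
            _ ≤ (p.1 : ℝ) := by exact_mod_cast hpM.1
        · calc (p.1 : ℝ) ≤ (⌊(a:ℝ) + c + δ⌋ : ℝ) := by exact_mod_cast hpM.2
            _ ≤ (a:ℝ) + c + δ := Int.floor_le _
      · intro m hm m' hm'
        obtain ⟨p, hp, rfl⟩ := Finset.mem_image.mp hm
        obtain ⟨q, hq, rfl⟩ := Finset.mem_image.mp hm'
        have e1 : f p = t := (Finset.mem_filter.mp hp).2
        have e2 : f q = t := (Finset.mem_filter.mp hq).2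
        simp only [hf] at e1 e2
        -- b * (p.1 - q.1) = a * (p.2 - q.2)
        have heq : (b:ℤ) * (p.1 - q.1) = (a:ℤ) * (p.2 - q.2) := by
          linear_combination e1 - e2
        have haeq : (a:ℤ) = ((a/g : ℕ):ℤ) * (g:ℤ) := by
          exact_mod_cast (Nat.div_mul_cancel hgdvda).symm
        have hbeq : (b:ℤ) = ((b/g : ℕ):ℤ) * (g:ℤ) := by
          exact_mod_cast (Nat.div_mul_cancel (Nat.gcd_dvd_right a b)).symm
        rw [haeq, hbeq] at heq
        have hgZ : (g:ℤ) ≠ 0 := by exact_mod_cast (by omega : g ≠ 0)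
        have heq2 : ((b/g : ℕ):ℤ) * (p.1 - q.1) = ((a/g : ℕ):ℤ) * (p.2 - q.2) := by
          apply mul_right_cancel₀ hgZ
          nlinarith [heq]
        have hdvd : ((a/g : ℕ):ℤ) ∣ ((b/g : ℕ):ℤ) * (p.1 - q.1) := ⟨p.2 - q.2, heq2⟩
        have hcop : IsCoprime ((a/g : ℕ):ℤ) ((b/g : ℕ):ℤ) := by
          rw [Int.isCoprime_iff_gcd_eq_one, Int.gcd_natCast_natCast]
          exact Nat.coprime_div_gcd_div_gcd (by omega)
        exact hcop.dvd_of_dvd_mul_left hdvd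
    -- convert to the natural number bound
    have harith : ((a:ℝ) + c + δ - (c - δ))/((a/g : ℕ):ℝ) + 1 ≤ 3*(g:ℝ) := by
      rw [hcast]
      have ha1 : (1:ℝ) ≤ a := by exact_mod_cast ha
      have hga : (g:ℝ) ≤ a := by
        exact_mod_cast Nat.le_of_dvd (by omega) hgdvda
      have hd : ((a:ℝ) + c + δ - (c - δ)) = (a:ℝ) + 2*δ := by ring
      rw [hd, div_div_eq_mul_div]
      have hstep : ((a:ℝ) + 2*δ) * g / a ≤ 2*(g:ℝ) := by
        rw [div_le_iff₀ ha0]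
        nlinarith
      have hg1 : (1:ℝ) ≤ g := by exact_mod_cast hg
      linarith
    have : (F.card : ℝ) ≤ 3*(g:ℝ) := by
      rw [hcardF]
      linarith
    exact_mod_cast this
  have hPcard : P.card ≤ (3*g) * (P.image f).card :=
    Finset.card_le_mul_card_image P (3*g) hfiber
  have hPcardR : (P.card : ℝ) ≤ 6*r + 3*g := by
    have h1 : (P.card : ℝ) ≤ (3*(g:ℝ)) * ((P.image f).card : ℝ) := by exact_mod_cast hPcard
    have h2 : (θ + r - (θ - r))/g + 1 = 2*r/g + 1 := by ring_nf
    rw [h2] at himg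
    have h3 : (3*(g:ℝ)) * ((P.image f).card : ℝ) ≤ (3*(g:ℝ)) * (2*r/g + 1) := by
      apply mul_le_mul_of_nonneg_left himg (by positivity)
    have h4 : (3*(g:ℝ)) * (2*r/g + 1) = 6*r + 3*g := by
      field_simp
      ring
    linarith
  -- put everything together
  calc volume {x ∈ Icc (0:ℝ) 1 | nint ((a:ℝ)*x + c) < δ ∧ nint ((b:ℝ)*x + d) < ε}
      ≤ volume (⋃ p ∈ P, I p) := measure_mono hsub
    _ ≤ ∑ p ∈ P, volume (I p) := measure_biUnion_finset_le P I
    _ ≤ ∑ _p ∈ P, ENNReal.ofReal L := Finset.sum_le_sum (fun p _ => hvol p)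
    _ = P.card • ENNReal.ofReal L := Finset.sum_const _
    _ = ENNReal.ofReal (P.card * L) := by
        rw [nsmul_eq_mul, ← ENNReal.ofReal_natCast, ← ENNReal.ofReal_mul (Nat.cast_nonneg _)]
    _ ≤ ENNReal.ofReal ((6*((b:ℝ)*δ + (a:ℝ)*ε) + 3*(Nat.gcd a b : ℝ)) * L) := by
        apply ENNReal.ofReal_le_ofReal
        apply mul_le_mul_of_nonneg_right _ hL0
        exact hPcardR

lemma tsum_min_le (A B : ℝ) (hA : 0 < A) (hB : 0 < B) :
    ∑' j : ℕ, min (A * (1/2:ℝ)^j) (B * 2^j) ≤ 5 * Real.sqrt (A*B) := by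
  have hhalf : Summable (fun j : ℕ => (1/2:ℝ)^j) :=
    summable_geometric_of_lt_one (by norm_num) (by norm_num)
  have hgeo : Summable (fun j : ℕ => A * (1/2:ℝ)^j) := hhalf.mul_left A
  have hnn : ∀ j : ℕ, 0 ≤ min (A * (1/2:ℝ)^j) (B * 2^j) :=
    fun j => le_min (by positivity) (by positivity)
  have hsum : Summable (fun j : ℕ => min (A * (1/2:ℝ)^j) (B * 2^j)) :=
    Summable.of_nonneg_of_le hnn (fun j => min_le_left _ _) hgeo
  set sA := Real.sqrt A with hsA
  set sB := Real.sqrt B with hsB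
  have hsA0 : 0 < sA := Real.sqrt_pos.mpr hA
  have hsB0 : 0 < sB := Real.sqrt_pos.mpr hB
  have hsA2 : sA * sA = A := Real.mul_self_sqrt hA.le
  have hsB2 : sB * sB = B := Real.mul_self_sqrt hB.le
  have hABs : Real.sqrt (A*B) = sA * sB := by
    rw [hsA, hsB, ← Real.sqrt_mul hA.le]
  have htsum_half : ∑' j : ℕ, (1/2:ℝ)^j = 2 := by
    rw [tsum_geometric_of_lt_one (by norm_num) (by norm_num)]
    norm_num
  rcases le_total A B with hcase | hcase
  · -- A ≤ B : bound by the geometric series with ratio 1/2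
    have h1 : ∑' j : ℕ, min (A * (1/2:ℝ)^j) (B * 2^j) ≤ ∑' j : ℕ, A * (1/2:ℝ)^j :=
      Summable.tsum_le_tsum (fun j => min_le_left _ _) hsum hgeo
    have h2 : ∑' j : ℕ, A * (1/2:ℝ)^j = 2 * A := by
      rw [tsum_mul_left, htsum_half]; ring
    have h3 : A ≤ sA * sB := by
      have : sA ≤ sB := Real.sqrt_le_sqrt hcase
      nlinarith
    rw [hABs]
    linarith
  · -- B ≤ A : split the sum at N
    have hdiv : Real.sqrt (A/B) = sA / sB := Real.sqrt_div hA.le B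
    have hdiv1 : 1 ≤ sA / sB := by
      rw [le_div_iff₀ hsB0]
      have : sB ≤ sA := Real.sqrt_le_sqrt hcase
      linarith
    obtain ⟨N, h2N, h2N'⟩ : ∃ N : ℕ, (2:ℝ)^N ≤ sA / sB ∧ sA / sB < (2:ℝ)^(N+1) := by
      refine ⟨⌊Real.logb 2 (sA / sB)⌋₊, ?_, ?_⟩
      · have hx0 : 0 ≤ Real.logb 2 (sA / sB) := Real.logb_nonneg (by norm_num) hdiv1
        have h := Real.rpow_le_rpow_of_exponent_le one_le_two (Nat.floor_le hx0)
        rwa [Real.rpow_natCast, Real.rpow_logb two_pos (by norm_num)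
          (div_pos hsA0 hsB0)] at h
      · have h := Real.rpow_lt_rpow_of_exponent_lt one_lt_two
          (Nat.lt_floor_add_one (Real.logb 2 (sA / sB)))
        rw [Real.rpow_logb two_pos (by norm_num) (div_pos hsA0 hsB0)] at h
        have he : ((2:ℝ)) ^ ((⌊Real.logb 2 (sA / sB)⌋₊:ℝ) + 1) =
            (2:ℝ)^(⌊Real.logb 2 (sA / sB)⌋₊+1) := by
          rw [show ((⌊Real.logb 2 (sA / sB)⌋₊:ℝ) + 1) =
            ((⌊Real.logb 2 (sA / sB)⌋₊+1 : ℕ) : ℝ) by push_cast; ring, Real.rpow_natCast]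
        rwa [he] at h
    rw [← Summable.sum_add_tsum_nat_add (N+1) hsum]
    have hhead : ∑ j ∈ Finset.range (N+1), min (A * (1/2:ℝ)^j) (B * 2^j) ≤ 2 * (sA * sB) := by
      calc ∑ j ∈ Finset.range (N+1), min (A * (1/2:ℝ)^j) (B * 2^j)
          ≤ ∑ j ∈ Finset.range (N+1), B * 2^j :=
            Finset.sum_le_sum (fun j _ => min_le_right _ _)
        _ = B * ∑ j ∈ Finset.range (N+1), (2:ℝ)^j := by rw [Finset.mul_sum]
        _ = B * ((2:ℝ)^(N+1) - 1) := by
            rw [geom_sum_eq (by norm_num : (2:ℝ) ≠ 1)]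
            norm_num
        _ ≤ 2 * (sA * sB) := by
            have hp : (2:ℝ)^(N+1) = 2 * 2^N := by ring
            have h2Npos : (0:ℝ) < 2^N := by positivity
            have h2N2 : (2:ℝ)^N * sB ≤ sA := (le_div_iff₀ hsB0).mp h2N
            nlinarith [mul_le_mul_of_nonneg_left h2N2 (by positivity : (0:ℝ) ≤ 2*sB), hB.le]
    have htail : ∑' j : ℕ, min (A * (1/2:ℝ)^(j + (N+1))) (B * 2^(j + (N+1))) ≤ 2 * (sA * sB) := by
      have hgeo' : Summable (fun j : ℕ => (A * (1/2:ℝ)^(N+1)) * (1/2:ℝ)^j) :=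
        hhalf.mul_left _
      have hle : ∀ j : ℕ, min (A * (1/2:ℝ)^(j + (N+1))) (B * 2^(j + (N+1))) ≤
          (A * (1/2:ℝ)^(N+1)) * (1/2:ℝ)^j := by
        intro j
        refine le_trans (min_le_left _ _) (le_of_eq ?_)
        rw [pow_add]
        ring
      have hsum' : Summable (fun j : ℕ => min (A * (1/2:ℝ)^(j + (N+1))) (B * 2^(j + (N+1)))) :=
        Summable.of_nonneg_of_le (fun j => le_min (by positivity) (by positivity)) hle hgeo'
      calc ∑' j : ℕ, min (A * (1/2:ℝ)^(j + (N+1))) (B * 2^(j + (N+1)))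
          ≤ ∑' j : ℕ, (A * (1/2:ℝ)^(N+1)) * (1/2:ℝ)^j := Summable.tsum_le_tsum hle hsum' hgeo'
        _ = (A * (1/2:ℝ)^(N+1)) * 2 := by rw [tsum_mul_left, htsum_half]
        _ ≤ 2 * (sA * sB) := by
            have hpow : (1/2:ℝ)^(N+1) = ((2:ℝ)^(N+1))⁻¹ := by
              rw [one_div, inv_pow]
            rw [hpow]
            have h2pos : (0:ℝ) < (2:ℝ)^(N+1) := by positivity
            rw [mul_comm (A * ((2:ℝ)^(N+1))⁻¹) 2, ← mul_assoc, mul_inv_le_iff₀ h2pos]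
            have hp2 : (2:ℝ)^(N+1) = 2 * 2^N := by ring
            have hkey : sA * sA ≤ 2 * (sA * sB) * 2^N := by
              have h1 : sA ≤ sB * (2 * 2^N) := by
                rw [div_lt_iff₀ hsB0] at h2N'
                rw [hp2] at h2N'
                nlinarith
              nlinarith
            nlinarith [hkey, hsA2, mul_pos hsA0 hsB0]
    nlinarith [mul_pos hsA0 hsB0]

lemma exists_dyadic {t : ℝ} (h0 : 0 < t) (h1 : t < 1) :
    ∃ j : ℕ, t < (1/2:ℝ)^j ∧ (1/2:ℝ)^(j+1) ≤ t := by
  classical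
  have hex : ∃ n : ℕ, (1/2:ℝ)^n ≤ t := by
    obtain ⟨n, hn⟩ := exists_pow_lt_of_lt_one h0 (by norm_num : (1/2:ℝ) < 1)
    exact ⟨n, hn.le⟩
  have hn : (1/2:ℝ)^(Nat.find hex) ≤ t := Nat.find_spec hex
  have hn0 : Nat.find hex ≠ 0 := by
    intro h
    rw [h] at hn
    simp at hn
    linarith
  refine ⟨Nat.find hex - 1, ?_, ?_⟩
  · have hmin := Nat.find_min hex (m := Nat.find hex - 1) (by omega)
    exact lt_of_not_ge hmin
  · have he : Nat.find hex - 1 + 1 = Nat.find hex := by omega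
    rw [he]
    exact hn

lemma exists_N (ψ : ℝ) (hψ : 0 < ψ) :
    ∃ N : ℕ, (1/2:ℝ)^N ≤ 8*ψ ∧ (N:ℝ) ≤ 3 * clog (1/ψ) := by
  have hclog1 : 1 ≤ clog (1/ψ) := le_max_left _ _
  rcases le_total 1 (8*ψ) with h | h
  · exact ⟨0, by simpa using h, by push_cast; linarith⟩
  · have h8ψ : (0:ℝ) < 8*ψ := by positivity
    have hy : 1 ≤ 1/(8*ψ) := by rw [le_div_iff₀ h8ψ]; linarith
    refine ⟨⌈Real.logb 2 (1/(8*ψ))⌉₊, ?_, ?_⟩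
    · set N := ⌈Real.logb 2 (1/(8*ψ))⌉₊ with hNdef
      have h1 : (1/(8*ψ)) ≤ (2:ℝ)^(N:ℝ) := by
        rw [show (1/(8*ψ)) = (2:ℝ) ^ (Real.logb 2 (1/(8*ψ))) from
          (Real.rpow_logb two_pos (by norm_num) (by positivity)).symm]
        exact Real.rpow_le_rpow_of_exponent_le one_le_two (Nat.le_ceil _)
      rw [Real.rpow_natCast] at h1
      have h2 : (0:ℝ) < (2:ℝ)^N := by positivity
      have hpow : (1/2:ℝ)^N = ((2:ℝ)^N)⁻¹ := by rw [one_div, inv_pow]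
      rw [hpow]
      rw [one_div] at h1
      have := (inv_le_iff_one_le_mul₀ h8ψ).mp h1
      rw [inv_le_iff_one_le_mul₀ h2]
      nlinarith
    · have hlbnn : 0 ≤ Real.logb 2 (1/(8*ψ)) := Real.logb_nonneg one_lt_two hy
      have hceil : (⌈Real.logb 2 (1/(8*ψ))⌉₊:ℝ) < Real.logb 2 (1/(8*ψ)) + 1 :=
        Nat.ceil_lt_add_one hlbnn
      have hl2 : (0.5:ℝ) ≤ Real.log 2 := by linarith [Real.log_two_gt_d9]
      have hlogx : 0 ≤ Real.log (1/(8*ψ)) := Real.log_nonneg hy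
      have hlogb : Real.logb 2 (1/(8*ψ)) ≤ 2 * Real.log (1/(8*ψ)) := by
        rw [Real.logb]
        calc Real.log (1/(8*ψ)) / Real.log 2 ≤ Real.log (1/(8*ψ)) / 0.5 := by
              apply div_le_div_of_nonneg_left hlogx (by norm_num) hl2
          _ = 2 * Real.log (1/(8*ψ)) := by ring
      have hloglog : Real.log (1/(8*ψ)) ≤ Real.log (1/ψ) :=
        Real.log_le_log (by positivity) (one_div_le_one_div_of_le hψ (by linarith))
      have hlogclog : Real.log (1/ψ) ≤ clog (1/ψ) := le_max_right _ _
      linarith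

set_option maxHeartbeats 1000000 in
lemma main_est (a b : ℕ) (ha : 1 ≤ a) (hab : a ≤ b) (c d ψ : ℝ) (hψ : 0 < ψ) :
    volume {x ∈ Icc (0:ℝ) 1 | nint ((a:ℝ)*x + c) * nint ((b:ℝ)*x + d) < ψ} ≤
      ENNReal.ofReal (1000 * (ψ * clog (1/ψ)) +
        1000 * ((Nat.gcd a b : ℝ) * Real.sqrt (ψ/((a:ℝ)*(b:ℝ))))) := by
  classical
  have hb : 1 ≤ b := le_trans ha hab
  have ha0 : (0:ℝ) < a := by exact_mod_cast ha
  have hb0 : (0:ℝ) < b := by exact_mod_cast hb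
  set g : ℕ := Nat.gcd a b with hgdef
  have hg : 1 ≤ g := Nat.gcd_pos_of_pos_left _ (by omega)
  have hg0R : (0:ℝ) < g := by exact_mod_cast hg
  have hclog1 : 1 ≤ clog (1/ψ) := le_max_left _ _
  obtain ⟨N, hN1, hN2⟩ := exists_N ψ hψ
  set A : ℝ := 2/(a:ℝ) with hA
  set B : ℝ := 4*ψ/(b:ℝ) with hB
  have hA0 : 0 < A := by positivity
  have hB0 : 0 < B := by positivity
  set Bs : ℕ → Set ℝ := fun j => {x ∈ Icc (0:ℝ) 1 |
    nint ((a:ℝ)*x + c) < (1/2:ℝ)^j ∧ nint ((b:ℝ)*x + d) < 2*ψ*2^j} with hBs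
  set Z : Set ℝ := ⋃ m : ℤ, {x : ℝ | (a:ℝ)*x + c = m} with hZ
  have hZvol : volume Z = 0 := by
    have hcount : Z.Countable := by
      apply countable_iUnion
      intro m
      apply Set.Subsingleton.countable
      intro x hx y hy
      have hxy : (a:ℝ)*x = (a:ℝ)*y := by
        simp only [mem_setOf_eq] at hx hy
        linarith
      exact mul_left_cancel₀ (ne_of_gt ha0) hxy
    exact hcount.measure_zero _
  have hcover : {x ∈ Icc (0:ℝ) 1 | nint ((a:ℝ)*x + c) * nint ((b:ℝ)*x + d) < ψ} ⊆
      Z ∪ ⋃ j : ℕ, Bs j := by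
    rintro x ⟨hx, hprod⟩
    rcases eq_or_lt_of_le (nint_nonneg ((a:ℝ)*x + c)) with h0 | h0
    · left
      obtain ⟨m, hm⟩ := nint_pos_ne h0.symm
      exact mem_iUnion.mpr ⟨m, hm⟩
    · right
      have ht1 : nint ((a:ℝ)*x + c) < 1 := lt_of_le_of_lt (nint_le_half _) (by norm_num)
      obtain ⟨j, hj1, hj2⟩ := exists_dyadic h0 ht1
      refine mem_iUnion.mpr ⟨j, hx, hj1, ?_⟩
      have hnb : 0 ≤ nint ((b:ℝ)*x + d) := nint_nonneg _
      by_contra hcon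
      push_neg at hcon
      have hprod2 : (1/2:ℝ)^(j+1) * (2*ψ*2^j) ≤
          nint ((a:ℝ)*x + c) * nint ((b:ℝ)*x + d) :=
        mul_le_mul hj2 hcon (by positivity) (le_of_lt h0)
      have hone : (1/2:ℝ)^j * 2^j = 1 := by
        rw [← mul_pow]
        norm_num
      have hcalc : (1/2:ℝ)^(j+1) * (2*ψ*2^j) = ψ := by
        have hp : (1/2:ℝ)^(j+1) = (1/2)*(1/2)^j := by ring
        rw [hp]
        nlinarith [hone]
      rw [hcalc] at hprod2
      linarith
  have hmeas : volume {x ∈ Icc (0:ℝ) 1 | nint ((a:ℝ)*x + c) * nint ((b:ℝ)*x + d) < ψ} ≤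
      ∑' j, volume (Bs j) := by
    calc volume {x ∈ Icc (0:ℝ) 1 | nint ((a:ℝ)*x + c) * nint ((b:ℝ)*x + d) < ψ}
        ≤ volume (Z ∪ ⋃ j : ℕ, Bs j) := measure_mono hcover
      _ ≤ volume Z + volume (⋃ j : ℕ, Bs j) := measure_union_le _ _
      _ = volume (⋃ j : ℕ, Bs j) := by rw [hZvol, zero_add]
      _ ≤ ∑' j, volume (Bs j) := measure_iUnion_le _
  set u : ℕ → ℝ := fun j => (if j ≤ N then 48*ψ else 0) +
    3*(g:ℝ)*min (A*(1/2:ℝ)^j) (B*2^j) + (if N < j then 6*(1/2:ℝ)^j else 0) with hu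
  have humin0 : ∀ j : ℕ, (0:ℝ) ≤ min (A*(1/2:ℝ)^j) (B*2^j) :=
    fun j => le_min (by positivity) (by positivity)
  have hu0 : ∀ j, 0 ≤ u j := by
    intro j
    apply add_nonneg (add_nonneg _ _) _
    · split <;> positivity
    · have := humin0 j
      positivity
    · split <;> positivity
  -- pointwise bounds on the measure of Bs j
  have hBsle : ∀ j, volume (Bs j) ≤ ENNReal.ofReal (u j) := by
    intro j
    rcases Nat.eq_zero_or_pos j with rfl | hj1
    · have hsub0 : Bs 0 ⊆ {x ∈ Icc (0:ℝ) 1 | nint ((b:ℝ)*x + d) < 2*ψ*2^0} :=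
        fun x hx => ⟨hx.1, hx.2.2⟩
      calc volume (Bs 0) ≤ volume {x ∈ Icc (0:ℝ) 1 | nint ((b:ℝ)*x + d) < 2*ψ*2^0} :=
            measure_mono hsub0
        _ ≤ ENNReal.ofReal (6*(2*ψ*2^0)) := measure_single b hb d _ (by positivity)
        _ ≤ ENNReal.ofReal (u 0) := by
            apply ENNReal.ofReal_le_ofReal
            simp only [hu, Nat.zero_le, if_true, Nat.not_lt_zero, if_false]
            have h00 : (0:ℝ) ≤ A ⊓ B := le_min hA0.le hB0.le
            norm_num
            nlinarith [h00, hg0R, hψ]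
    · rcases le_or_gt j N with hjN | hjN
      · -- pair bound
        have hδhalf : ((1/2:ℝ)^j) ≤ 1/2 := by
          calc ((1/2:ℝ)^j) ≤ (1/2:ℝ)^1 := pow_le_pow_of_le_one (by norm_num) (by norm_num) hj1
            _ = 1/2 := by norm_num
        have hpair := measure_pair a b ha hb c d ((1/2:ℝ)^j) (2*ψ*2^j)
          (by positivity) hδhalf (by positivity)
        apply le_trans hpair
        apply ENNReal.ofReal_le_ofReal
        have hmeq : min (2*((1/2:ℝ)^j)/(a:ℝ)) (2*(2*ψ*2^j)/(b:ℝ)) =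
            min (A*(1/2:ℝ)^j) (B*2^j) := by
          rw [hA, hB]
          congr 1
          · ring
          · ring
        rw [hmeq]
        simp only [hu]
        rw [if_pos hjN, if_neg (show ¬ N < j by omega)]
        have hm1 : min (A*(1/2:ℝ)^j) (B*2^j) ≤ A*(1/2:ℝ)^j := min_le_left _ _
        have hm2 : min (A*(1/2:ℝ)^j) (B*2^j) ≤ B*2^j := min_le_right _ _
        have hm0 := humin0 j
        have hone : (1/2:ℝ)^j * 2^j = 1 := by
          rw [← mul_pow]; norm_num
        have hAa : A * (a:ℝ) = 2 := by rw [hA]; field_simp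
        have hBb : B * (b:ℝ) = 4*ψ := by rw [hB]; field_simp
        have h2jpos : (0:ℝ) < (2:ℝ)^j := by positivity
        have hhpos : (0:ℝ) < (1/2:ℝ)^j := by positivity
        -- (6*(b*δ + a*ε) + 3*g) * m ≤ 48ψ + 3*g*m
        have hkey : ((b:ℝ)*((1/2:ℝ)^j) + (a:ℝ)*(2*ψ*2^j)) * min (A*(1/2:ℝ)^j) (B*2^j) ≤ 8*ψ := by
          have e1 : (b:ℝ)*((1/2:ℝ)^j) * min (A*(1/2:ℝ)^j) (B*2^j) ≤
              (b:ℝ)*((1/2:ℝ)^j) * (B*2^j) :=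
            mul_le_mul_of_nonneg_left hm2 (by positivity)
          have e2 : (a:ℝ)*(2*ψ*2^j) * min (A*(1/2:ℝ)^j) (B*2^j) ≤
              (a:ℝ)*(2*ψ*2^j) * (A*(1/2:ℝ)^j) :=
            mul_le_mul_of_nonneg_left hm1 (by positivity)
          have e3 : (b:ℝ)*((1/2:ℝ)^j) * (B*2^j) = 4*ψ := by
            have : (b:ℝ)*((1/2:ℝ)^j) * (B*2^j) = (B*(b:ℝ))*((1/2:ℝ)^j * 2^j) := by ring
            rw [this, hBb, hone]
            ring
          have e4 : (a:ℝ)*(2*ψ*2^j) * (A*(1/2:ℝ)^j) = 4*ψ := by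
            have : (a:ℝ)*(2*ψ*2^j) * (A*(1/2:ℝ)^j) = (A*(a:ℝ))*(2*ψ)*((1/2:ℝ)^j * 2^j) := by
              ring
            rw [this, hAa, hone]
            ring
          have e5 : ((b:ℝ)*((1/2:ℝ)^j) + (a:ℝ)*(2*ψ*2^j)) * min (A*(1/2:ℝ)^j) (B*2^j) =
              (b:ℝ)*((1/2:ℝ)^j) * min (A*(1/2:ℝ)^j) (B*2^j) +
              (a:ℝ)*(2*ψ*2^j) * min (A*(1/2:ℝ)^j) (B*2^j) := by ring
          rw [e5]
          rw [e3] at e1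
          rw [e4] at e2
          linarith
        rw [← hgdef]
        have hexp : (6*((b:ℝ)*((1/2:ℝ)^j) + (a:ℝ)*(2*ψ*2^j)) + 3*(g:ℝ)) *
            min (A*(1/2:ℝ)^j) (B*2^j) =
            6*(((b:ℝ)*((1/2:ℝ)^j) + (a:ℝ)*(2*ψ*2^j)) * min (A*(1/2:ℝ)^j) (B*2^j)) +
            3*(g:ℝ)*min (A*(1/2:ℝ)^j) (B*2^j) := by ring
        rw [hexp]
        linarith [hkey]
      · -- tail : single bound
        have hsub : Bs j ⊆ {x ∈ Icc (0:ℝ) 1 | nint ((a:ℝ)*x + c) < (1/2:ℝ)^j} :=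
          fun x hx => ⟨hx.1, hx.2.1⟩
        calc volume (Bs j) ≤ volume {x ∈ Icc (0:ℝ) 1 | nint ((a:ℝ)*x + c) < (1/2:ℝ)^j} :=
              measure_mono hsub
          _ ≤ ENNReal.ofReal (6*(1/2:ℝ)^j) := measure_single a ha c _ (by positivity)
          _ ≤ ENNReal.ofReal (u j) := by
              apply ENNReal.ofReal_le_ofReal
              simp only [hu]
              rw [if_neg (show ¬ j ≤ N by omega), if_pos hjN]
              have hmin := humin0 j
              nlinarith [hmin, hg0R]
  -- summability of the three pieces
  have hsumhalf : Summable (fun j : ℕ => (1/2:ℝ)^j) :=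
    summable_geometric_of_lt_one (by norm_num) (by norm_num)
  have htsum_half : ∑' j : ℕ, (1/2:ℝ)^j = 2 := by
    rw [tsum_geometric_of_lt_one (by norm_num) (by norm_num)]
    norm_num
  have hsumA : Summable (fun j : ℕ => if j ≤ N then (48*ψ:ℝ) else 0) := by
    apply summable_of_ne_finset_zero (s := Finset.range (N+1))
    intro j hj
    rw [Finset.mem_range] at hj
    rw [if_neg (by omega)]
  have hsumB : Summable (fun j : ℕ => 3*(g:ℝ)*min (A*(1/2:ℝ)^j) (B*2^j)) := by
    apply Summable.mul_left
    exact Summable.of_nonneg_of_le humin0 (fun j => min_le_left _ _) (hsumhalf.mul_left A)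
  have hsumC : Summable (fun j : ℕ => if N < j then 6*(1/2:ℝ)^j else 0) := by
    apply Summable.of_nonneg_of_le (fun j => by split <;> positivity)
      (fun j => ?_) (hsumhalf.mul_left 6)
    split
    · exact le_rfl
    · positivity
  have husum : Summable u := (hsumA.add hsumB).add hsumC
  -- values of the three sums
  have htA : ∑' j : ℕ, (if j ≤ N then (48*ψ:ℝ) else 0) = 48*ψ*((N:ℝ)+1) := by
    rw [tsum_eq_sum (s := Finset.range (N+1))
      (fun j hj => by rw [Finset.mem_range] at hj; rw [if_neg (by omega)])]
    have hcg : ∀ j ∈ Finset.range (N+1), (if j ≤ N then (48*ψ:ℝ) else 0) = 48*ψ := by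
      intro j hj
      rw [Finset.mem_range] at hj
      exact if_pos (by omega)
    calc (∑ j ∈ Finset.range (N+1), if j ≤ N then (48*ψ:ℝ) else 0)
        = ∑ _j ∈ Finset.range (N+1), (48*ψ:ℝ) := Finset.sum_congr rfl hcg
      _ = 48*ψ*((N:ℝ)+1) := by
          rw [Finset.sum_const, Finset.card_range, nsmul_eq_mul]
          push_cast
          ring
  have htB : ∑' j : ℕ, 3*(g:ℝ)*min (A*(1/2:ℝ)^j) (B*2^j) ≤ 3*(g:ℝ)*(5*Real.sqrt (A*B)) := by
    rw [tsum_mul_left]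
    exact mul_le_mul_of_nonneg_left (tsum_min_le A B hA0 hB0) (by positivity)
  have htC : ∑' j : ℕ, (if N < j then 6*(1/2:ℝ)^j else 0) ≤ 48*ψ := by
    rw [← Summable.sum_add_tsum_nat_add (N+1) hsumC]
    have hh : ∑ j ∈ Finset.range (N+1), (if N < j then 6*(1/2:ℝ)^j else 0) = 0 :=
      Finset.sum_eq_zero (fun j hj => by
        rw [Finset.mem_range] at hj; rw [if_neg (by omega)])
    rw [hh, zero_add]
    have hcg : ∀ k : ℕ, (if N < k + (N+1) then 6*(1/2:ℝ)^(k+(N+1)) else 0) =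
        (6*(1/2:ℝ)^(N+1))*(1/2:ℝ)^k := by
      intro k
      rw [if_pos (by omega), pow_add]
      ring
    rw [tsum_congr hcg, tsum_mul_left, htsum_half]
    have hps : (6*(1/2:ℝ)^(N+1))*2 = 6*(1/2:ℝ)^N := by ring
    rw [hps]
    linarith [hN1]
  have htotal : ∑' j, u j ≤ 48*ψ*((N:ℝ)+1) + 3*(g:ℝ)*(5*Real.sqrt (A*B)) + 48*ψ := by
    have hstep1 : ∑' j, u j =
        (∑' j : ℕ, ((if j ≤ N then (48*ψ:ℝ) else 0) +
          3*(g:ℝ)*min (A*(1/2:ℝ)^j) (B*2^j))) +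
        (∑' j : ℕ, (if N < j then 6*(1/2:ℝ)^j else 0)) :=
      Summable.tsum_add (hsumA.add hsumB) hsumC
    have hstep2 : (∑' j : ℕ, ((if j ≤ N then (48*ψ:ℝ) else 0) +
          3*(g:ℝ)*min (A*(1/2:ℝ)^j) (B*2^j))) =
        (∑' j : ℕ, (if j ≤ N then (48*ψ:ℝ) else 0)) +
        (∑' j : ℕ, 3*(g:ℝ)*min (A*(1/2:ℝ)^j) (B*2^j)) :=
      Summable.tsum_add hsumA hsumB
    rw [hstep1, hstep2, htA]
    clear_value u Bs Z
    linarith [htB, htC]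
  -- bound sqrt (A*B)
  have hsqrtAB : Real.sqrt (A*B) ≤ 3 * Real.sqrt (ψ/((a:ℝ)*(b:ℝ))) := by
    have hABeq : A*B = 8*(ψ/((a:ℝ)*(b:ℝ))) := by
      rw [hA, hB]
      field_simp
      ring
    rw [hABeq, Real.sqrt_mul (by norm_num : (0:ℝ) ≤ 8)]
    have h89 : Real.sqrt 8 ≤ 3 := by
      rw [show (3:ℝ) = Real.sqrt 9 by
        rw [show (9:ℝ) = 3^2 by norm_num, Real.sqrt_sq (by norm_num)]]
      exact Real.sqrt_le_sqrt (by norm_num)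
    exact mul_le_mul_of_nonneg_right h89 (Real.sqrt_nonneg _)
  -- final assembly
  calc volume {x ∈ Icc (0:ℝ) 1 | nint ((a:ℝ)*x + c) * nint ((b:ℝ)*x + d) < ψ}
      ≤ ∑' j, volume (Bs j) := hmeas
    _ ≤ ∑' j, ENNReal.ofReal (u j) := ENNReal.tsum_le_tsum hBsle
    _ = ENNReal.ofReal (∑' j, u j) := (ENNReal.ofReal_tsum_of_nonneg hu0 husum).symm
    _ ≤ ENNReal.ofReal (1000 * (ψ * clog (1/ψ)) +
        1000 * ((Nat.gcd a b : ℝ) * Real.sqrt (ψ/((a:ℝ)*(b:ℝ))))) := by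
        apply ENNReal.ofReal_le_ofReal
        have hsq0 : 0 ≤ Real.sqrt (ψ/((a:ℝ)*(b:ℝ))) := Real.sqrt_nonneg _
        have e1 : 48*ψ*(N:ℝ) ≤ 48*ψ*(3*clog (1/ψ)) :=
          mul_le_mul_of_nonneg_left hN2 (by positivity)
        have e2 : 48*ψ ≤ 48*ψ*clog (1/ψ) := by nlinarith
        have e3 : 3*(g:ℝ)*(5*Real.sqrt (A*B)) ≤ 45*(g:ℝ)*Real.sqrt (ψ/((a:ℝ)*(b:ℝ))) := by
          have h15 := mul_le_mul_of_nonneg_left hsqrtAB (by positivity : (0:ℝ) ≤ 15*(g:ℝ))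
          nlinarith [h15]
        have e6 : 0 ≤ (g:ℝ)*Real.sqrt (ψ/((a:ℝ)*(b:ℝ))) := mul_nonneg hg0R.le hsq0
        have e7 : 0 ≤ ψ * clog (1/ψ) := by positivity
        have hgeq : (Nat.gcd a b : ℝ) = (g:ℝ) := by rw [hgdef]
        rw [hgeq]
        linarith [htotal, e1, e2, e3, e6, e7]

theorem stmt11 (a b : ℕ → ℕ) (c d : ℕ → ℝ) (ψ : ℕ → ℝ)
    (ha : ∀ n, 1 ≤ a n) (hab : ∀ n, a n ≤ b n) (hψ : ∀ n, 0 ≤ ψ n)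
    (hsum1 : Summable (fun n => if 0 < ψ n then ψ n * clog (1 / ψ n) else 0))
    (hsum2 : Summable (fun n =>
      (Nat.gcd (a n) (b n) : ℝ) * (ψ n / (a n * b n)) ^ ((1:ℝ) / 2))) :
    volume {x ∈ Icc (0:ℝ) 1 |
      {n : ℕ | nint (a n * x + c n) * nint (b n * x + d n) < ψ n}.Infinite} = 0 := by
  classical
  set E : ℕ → Set ℝ := fun n => {x ∈ Icc (0:ℝ) 1 |
    nint ((a n : ℝ)*x + c n) * nint ((b n : ℝ)*x + d n) < ψ n} with hE
  set F : ℕ → ℝ := fun n => 1000 * (if 0 < ψ n then ψ n * clog (1/ψ n) else 0) +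
    1000 * ((Nat.gcd (a n) (b n) : ℝ) * (ψ n / ((a n : ℝ) * (b n : ℝ))) ^ ((1:ℝ)/2)) with hF
  have hF0 : ∀ n, 0 ≤ F n := by
    intro n
    apply add_nonneg
    · apply mul_nonneg (by norm_num)
      split
      · have hcl : (1:ℝ) ≤ clog (1/ψ n) := le_max_left _ _
        nlinarith [hcl]
      · exact le_rfl
    · apply mul_nonneg (by norm_num)
      apply mul_nonneg (Nat.cast_nonneg _)
      apply Real.rpow_nonneg
      exact div_nonneg (hψ n) (by positivity)
  have hFsum : Summable F := (hsum1.mul_left 1000).add (hsum2.mul_left 1000)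
  have hEle : ∀ n, volume (E n) ≤ ENNReal.ofReal (F n) := by
    intro n
    rcases (hψ n).lt_or_eq with hpos | hzero
    · have hmain := main_est (a n) (b n) (ha n) (hab n) (c n) (d n) (ψ n) hpos
      have hsq : Real.sqrt (ψ n/((a n:ℝ)*(b n:ℝ))) =
          (ψ n / ((a n:ℝ) * (b n:ℝ))) ^ ((1:ℝ)/2) := Real.sqrt_eq_rpow _
      rw [hF]
      simp only [if_pos hpos]
      rw [← hsq]
      exact hmain
    · have hempty : E n = ∅ := by
        rw [hE]
        ext x
        simp only [mem_setOf_eq, mem_empty_iff_false, iff_false, not_and]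
        intro hx
        rw [← hzero]
        exact not_lt.mpr (mul_nonneg (nint_nonneg _) (nint_nonneg _))
      rw [hempty]
      simp
  have htsum : ∑' n, volume (E n) ≠ ⊤ := by
    have h1 : ∑' n, volume (E n) ≤ ∑' n, ENNReal.ofReal (F n) := ENNReal.tsum_le_tsum hEle
    have h2 : ∑' n, ENNReal.ofReal (F n) = ENNReal.ofReal (∑' n, F n) :=
      (ENNReal.ofReal_tsum_of_nonneg hF0 hFsum).symm
    rw [h2] at h1
    exact ne_top_of_le_ne_top ENNReal.ofReal_ne_top h1
  have hae := MeasureTheory.ae_finite_setOf_mem (μ := volume) htsum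
  rw [ae_iff] at hae
  apply measure_mono_null _ hae
  rintro x ⟨hx, hinf⟩
  simp only [mem_setOf_eq]
  intro hfin
  exact hinf (hfin.subset (fun n hn => ⟨hx, hn⟩))
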